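/- Every Hilbert space satisfies property (S'): for all unit vectors x ≠ y and every δ > 0 there exists z with ‖z‖ < δ such that one of ‖x+z‖, ‖y+z‖ exceeds 1 and the other is less than 1. -/

import Mathlib

open RealInnerProductSpace


theorem stmt9 {X : Type*} [NormedAddCommGroup X] [InnerProductSpace ℝ X]
    [CompleteSpace X] :
    ∀ x y : X, ‖x‖ = 1 → ‖y‖ = 1 → x ≠ y → ∀ δ : ℝ, 0 < δ →
      ∃ z : X, ‖z‖ < δ ∧
        ((1 < ‖x + z‖ ∧ ‖y + z‖ < 1) ∨ (‖x + z‖ < 1 ∧ 1 < ‖y + z‖)) := by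
  intro x y hx hy hxy δ hδ
  set c : ℝ := (inner ℝ x y : ℝ) with hc
  have hc1 : c < 1 := by
    have hle : c ≤ 1 := by
      have := real_inner_le_norm x y
      rw [hx, hy] at this; simpa using this
    rcases lt_or_eq_of_le hle with h | h
    · exact h
    · exact absurd ((inner_eq_one_iff_of_norm_eq_one hx hy).mp h) hxy
  have hsub : x - y ≠ 0 := sub_ne_zero.mpr hxy
  have hns : (0:ℝ) < ‖x - y‖ := norm_pos_iff.mpr hsub
  set t : ℝ := min (1/2) (δ / (2 * ‖x - y‖)) with ht
  have ht0 : 0 < t := lt_min (by norm_num) (div_pos hδ (by positivity))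
  have ht1 : t < 1 := lt_of_le_of_lt (min_le_left _ _) (by norm_num)
  refine ⟨t • (x - y), ?_, Or.inl ⟨?_, ?_⟩⟩
  · have : ‖t • (x - y)‖ = t * ‖x - y‖ := by
      rw [norm_smul, Real.norm_of_nonneg ht0.le]
    rw [this]
    have h2 : t ≤ δ / (2 * ‖x - y‖) := min_le_right _ _
    calc t * ‖x - y‖ ≤ (δ / (2 * ‖x - y‖)) * ‖x - y‖ :=
          mul_le_mul_of_nonneg_right h2 hns.le
      _ = δ / 2 := by field_simp
      _ < δ := by linarith
  · have hxsq : ‖x + t • (x - y)‖^2 = 1 + (2 - 2*c) * (t + t^2) := by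
      rw [norm_add_sq_real, real_inner_smul_right, inner_sub_right,
        real_inner_self_eq_norm_sq, hx, norm_smul, Real.norm_of_nonneg ht0.le,
        mul_pow, ← hc]
      have hxy2 : ‖x - y‖^2 = 2 - 2*c := by
        rw [norm_sub_sq_real, hx, hy, ← hc]; ring
      rw [hxy2]; ring
    have h1 : (1:ℝ) < ‖x + t • (x - y)‖^2 := by
      rw [hxsq]; nlinarith
    nlinarith [norm_nonneg (x + t • (x - y))]
  · have hysq : ‖y + t • (x - y)‖^2 = 1 + (2 - 2*c) * (t^2 - t) := by
      rw [norm_add_sq_real, real_inner_smul_right, inner_sub_right,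
        real_inner_self_eq_norm_sq, hy, norm_smul, Real.norm_of_nonneg ht0.le,
        mul_pow]
      have hyx : (inner ℝ y x : ℝ) = c := by rw [hc, real_inner_comm]
      have hxy2 : ‖x - y‖^2 = 2 - 2*c := by
        rw [norm_sub_sq_real, hx, hy, ← hc]; ring
      rw [hyx, hxy2]; ring
    have h1 : ‖y + t • (x - y)‖^2 < 1 := by
      rw [hysq]
      have h2 : t^2 - t < 0 := by nlinarith
      nlinarith [mul_neg_of_pos_of_neg (by linarith : (0:ℝ) < 2 - 2*c) h2]
    nlinarith [norm_nonneg (y + t • (x - y))]
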